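/- arXiv:0906.1356 — 7 statements merged into one kernel-verified Lean document; each statement's English description precedes it below -/
import Mathlib

section
/- If X is a discrete symmetric random variable (i.e., X and -X have the same distribution) with finite second moment E(X^2), then Prob(X ≥ sqrt(E(X^2))) > 0. -/
open Finset

/- A discrete symmetric random variable `X` on a finite probability space `(Ω, p)`
(symmetric: `Prob(X = a) = Prob(X = -a)` for all real `a`) satisfies
`Prob(X ≥ sqrt(E(X²))) > 0`. -/
open Classical in
theorem stmt_0 {Ω : Type} [Fintype Ω] (p : Ω → ℝ) (X : Ω → ℝ)
    (hp : ∀ ω, 0 ≤ p ω) (hsum : ∑ ω, p ω = 1)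
    (hsym : ∀ a : ℝ,
      ∑ ω ∈ univ.filter (fun ω => X ω = a), p ω
        = ∑ ω ∈ univ.filter (fun ω => X ω = -a), p ω) :
    0 < ∑ ω ∈ univ.filter (fun ω => Real.sqrt (∑ ω', p ω' * X ω' ^ 2) ≤ X ω), p ω := by
  set E := ∑ ω', p ω' * X ω' ^ 2 with hEdef
  have hE0 : 0 ≤ E := Finset.sum_nonneg fun ω _ => mul_nonneg (hp ω) (sq_nonneg _)
  set m := Real.sqrt E with hm
  have hm2 : m ^ 2 = E := Real.sq_sqrt hE0
  by_contra h
  push_neg at h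
  have hnn : ∀ ω ∈ univ.filter (fun ω => m ≤ X ω), 0 ≤ p ω := fun ω _ => hp ω
  have hzero : ∑ ω ∈ univ.filter (fun ω => m ≤ X ω), p ω = 0 :=
    le_antisymm h (Finset.sum_nonneg hnn)
  have hz : ∀ ω, m ≤ X ω → p ω = 0 := by
    intro ω hω
    exact (Finset.sum_eq_zero_iff_of_nonneg hnn).1 hzero ω (by simp [hω])
  have habs : ∀ ω, p ω ≠ 0 → |X ω| < m := by
    intro ω hpω
    rcases lt_or_ge (X ω) m with h1 | h1
    · rcases lt_or_ge (-m) (X ω) with h2 | h2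
      · rw [abs_lt]; exact ⟨by linarith, h1⟩
      · exfalso
        have hs := hsym (X ω)
        have hsub : ∀ ω' ∈ univ.filter (fun ω' => X ω' = -(X ω)), p ω' = 0 := by
          intro ω' hω'
          simp only [mem_filter] at hω'
          exact hz ω' (by rw [hω'.2]; linarith)
        have hz2 : ∑ ω' ∈ univ.filter (fun ω' => X ω' = -(X ω)), p ω' = 0 :=
          Finset.sum_eq_zero hsub
        rw [hz2] at hs
        have hmem : ω ∈ univ.filter (fun ω' => X ω' = X ω) := by simp
        have hle : p ω ≤ ∑ ω' ∈ univ.filter (fun ω' => X ω' = X ω), p ω' :=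
          Finset.single_le_sum (fun ω' _ => hp ω') hmem
        exact hpω (le_antisymm (hs ▸ hle) (hp ω))
    · exact absurd (hz ω h1) hpω
  obtain ⟨ω0, hω0⟩ : ∃ ω, p ω ≠ 0 := by
    by_contra hc
    push_neg at hc
    simp [hc] at hsum
  have hlt : E < ∑ ω, p ω * m ^ 2 := by
    apply Finset.sum_lt_sum
    · intro ω _
      rcases eq_or_ne (p ω) 0 with h0 | h0
      · simp [h0]
      · have hb := habs ω h0
        have h2 : X ω ^ 2 ≤ m ^ 2 := by nlinarith [abs_nonneg (X ω), sq_abs (X ω)]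
        exact mul_le_mul_of_nonneg_left h2 (hp ω)
    · refine ⟨ω0, Finset.mem_univ ω0, ?_⟩
      have hb := habs ω0 hω0
      have h2 : X ω0 ^ 2 < m ^ 2 := by nlinarith [sq_abs (X ω0), abs_nonneg (X ω0)]
      exact mul_lt_mul_of_pos_left h2 (lt_of_le_of_ne (hp ω0) (Ne.symm hω0))
  rw [← Finset.sum_mul, hsum, one_mul, hm2] at hlt
  exact lt_irrefl E hlt
end

section
/- Let D = (V, A) be an oriented graph with positive real arc weights w_{ij}, n = |V|. Choose a bijection α : V → {1,...,n} uniformly at random and define X(α) = (1/2) Σ_{ij∈A} ε_{ij}(α), where ε_{ij}(α) = w_{ij} if α(i) < α(j) and ε_{ij}(α) = −w_{ij} otherwise. Then E(X^2) ≥ W^{(2)}/12, where W^{(2)} = Σ_{ij∈A} w_{ij}^2. -/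
open Finset

section Aux
set_option linter.unusedSectionVars false
variable {V : Type} [Fintype V] [DecidableEq V] {n : ℕ}

private def sg (α : V ≃ Fin n) (a : V × V) : ℝ := if α a.1 < α a.2 then 1 else -1

private def mid (α : V ≃ Fin n) (i j k : V) : ℝ :=
  if (α j < α i ∧ α i < α k) ∨ (α k < α i ∧ α i < α j) then 1 else 0

private def preEquiv (σ : V ≃ V) : (V ≃ Fin n) ≃ (V ≃ Fin n) :=
  ⟨fun α => σ.trans α, fun α => σ.symm.trans α,
   fun α => by ext v; simp, fun α => by ext v; simp⟩

private lemma sum_precomp (σ : V ≃ V) (f : (V ≃ Fin n) → ℝ) :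
    ∑ α : V ≃ Fin n, f α = ∑ α : V ≃ Fin n, f (σ.trans α) :=
  (Fintype.sum_equiv (preEquiv σ) (fun α => f (σ.trans α)) f (fun _ => rfl)).symm

private lemma mid_swap (a b c : V) (hac : c ≠ a) (hbc : c ≠ b) (α : V ≃ Fin n) :
    mid ((Equiv.swap a b).trans α) a b c = mid α b a c := by
  unfold mid
  simp only [Equiv.trans_apply, Equiv.swap_apply_left, Equiv.swap_apply_right,
    Equiv.swap_apply_of_ne_of_ne hac hbc]

private lemma mid_symm (a b c : V) (α : V ≃ Fin n) : mid α a b c = mid α a c b :=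
  if_congr or_comm rfl rfl

private lemma tri_nat (a b c : ℕ) (h1 : a ≠ b) (h2 : a ≠ c) (h3 : b ≠ c) :
    (if b < a ∧ a < c ∨ c < a ∧ a < b then (1:ℝ) else 0) +
    (if a < b ∧ b < c ∨ c < b ∧ b < a then 1 else 0) +
    (if a < c ∧ c < b ∨ b < c ∧ c < a then 1 else 0) = 1 := by
  split_ifs <;> first | (exfalso; omega) | norm_num

private lemma mid_tri (i j k : V) (hij : i ≠ j) (hik : i ≠ k) (hjk : j ≠ k)
    (α : V ≃ Fin n) : mid α i j k + mid α j i k + mid α k i j = 1 := by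
  have h1 : (α i : ℕ) ≠ (α j : ℕ) := fun h => hij (α.injective (Fin.val_injective h))
  have h2 : (α i : ℕ) ≠ (α k : ℕ) := fun h => hik (α.injective (Fin.val_injective h))
  have h3 : (α j : ℕ) ≠ (α k : ℕ) := fun h => hjk (α.injective (Fin.val_injective h))
  unfold mid
  simp only [Fin.lt_def]
  exact tri_nat _ _ _ h1 h2 h3

private lemma mid_sum (i j k : V) (hij : i ≠ j) (hik : i ≠ k) (hjk : j ≠ k) :
    ∑ α : V ≃ Fin n, mid α i j k = (Fintype.card (V ≃ Fin n) : ℝ) / 3 := by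
  have hswap : ∀ a b c : V, c ≠ a → c ≠ b →
      (∑ α : V ≃ Fin n, mid α a b c) = ∑ α : V ≃ Fin n, mid α b a c := by
    intro a b c hca hcb
    rw [sum_precomp (Equiv.swap a b) (fun α => mid α a b c)]
    exact Fintype.sum_congr _ _ (fun α => mid_swap a b c hca hcb α)
  have e2 : (∑ α : V ≃ Fin n, mid α i j k) = ∑ α : V ≃ Fin n, mid α j i k :=
    hswap i j k hik.symm hjk.symm
  have e3 : (∑ α : V ≃ Fin n, mid α i j k) = ∑ α : V ≃ Fin n, mid α k i j := by
    calc (∑ α : V ≃ Fin n, mid α i j k) = ∑ α : V ≃ Fin n, mid α i k j := by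
          simp only [mid_symm]
      _ = ∑ α : V ≃ Fin n, mid α k i j := hswap i k j hij.symm hjk
  have htot : (∑ α : V ≃ Fin n, (mid α i j k + mid α j i k + mid α k i j))
      = (Fintype.card (V ≃ Fin n) : ℝ) := by
    rw [Fintype.sum_congr _ _ (mid_tri i j k hij hik hjk)]
    simp [card_univ]
  rw [Finset.sum_add_distrib, Finset.sum_add_distrib, ← e2, ← e3] at htot
  linarith

private lemma val_ne {α : V ≃ Fin n} {i j : V} (h : i ≠ j) : (α i : ℕ) ≠ (α j : ℕ) :=
  fun hh => h (α.injective (Fin.val_injective hh))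

private lemma sg_flip (i j : V) (hij : i ≠ j) (α : V ≃ Fin n) :
    sg ((Equiv.swap i j).trans α) (i, j) = - sg α (i, j) := by
  have h := val_ne (α := α) hij
  unfold sg
  simp only [Equiv.trans_apply, Equiv.swap_apply_left, Equiv.swap_apply_right, Fin.lt_def]
  split_ifs <;> first | (exfalso; omega) | norm_num

private lemma sg_fix (i j k l : V) (hk1 : k ≠ i) (hk2 : k ≠ j) (hl1 : l ≠ i) (hl2 : l ≠ j)
    (α : V ≃ Fin n) : sg ((Equiv.swap i j).trans α) (k, l) = sg α (k, l) := by
  unfold sg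
  simp only [Equiv.trans_apply, Equiv.swap_apply_of_ne_of_ne hk1 hk2,
    Equiv.swap_apply_of_ne_of_ne hl1 hl2]

private lemma corr_disjoint (i j k l : V) (hij : i ≠ j) (hk1 : k ≠ i) (hk2 : k ≠ j)
    (hl1 : l ≠ i) (hl2 : l ≠ j) :
    ∑ α : V ≃ Fin n, sg α (i, j) * sg α (k, l) = 0 := by
  have h := sum_precomp (Equiv.swap i j) (fun α : V ≃ Fin n => sg α (i, j) * sg α (k, l))
  simp only [sg_flip i j hij, sg_fix i j k l hk1 hk2 hl1 hl2, neg_mul] at h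
  rw [Finset.sum_neg_distrib] at h
  linarith

private lemma prod_nat_tail (a b c : ℕ) (hab : a ≠ b) (hac : a ≠ c) :
    (if a < b then (1:ℝ) else -1) * (if a < c then 1 else -1)
      = 1 - 2 * (if b < a ∧ a < c ∨ c < a ∧ a < b then 1 else 0) := by
  split_ifs <;> first | (exfalso; omega) | norm_num

private lemma prod_nat_head (a b c : ℕ) (hab : a ≠ b) (hac : a ≠ c) :
    (if b < a then (1:ℝ) else -1) * (if c < a then 1 else -1)
      = 1 - 2 * (if b < a ∧ a < c ∨ c < a ∧ a < b then 1 else 0) := by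
  split_ifs <;> first | (exfalso; omega) | norm_num

private lemma prod_nat_path (a b c : ℕ) (hab : a ≠ b) (hbc : b ≠ c) :
    (if a < b then (1:ℝ) else -1) * (if b < c then 1 else -1)
      = 2 * (if a < b ∧ b < c ∨ c < b ∧ b < a then 1 else 0) - 1 := by
  split_ifs <;> first | (exfalso; omega) | norm_num

private lemma corr_tail (i j k : V) (hij : i ≠ j) (hik : i ≠ k) (hjk : j ≠ k) :
    ∑ α : V ≃ Fin n, sg α (i, j) * sg α (i, k)
      = (Fintype.card (V ≃ Fin n) : ℝ) / 3 := by
  have hpt : ∀ α : V ≃ Fin n, sg α (i, j) * sg α (i, k) = 1 - 2 * mid α i j k := by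
    intro α
    unfold sg mid
    simp only [Fin.lt_def]
    exact prod_nat_tail _ _ _ (val_ne hij) (val_ne hik)
  rw [Fintype.sum_congr _ _ hpt, Finset.sum_sub_distrib, Finset.sum_const,
    ← Finset.mul_sum, mid_sum i j k hij hik hjk]
  simp only [card_univ, nsmul_eq_mul, mul_one]
  ring

private lemma corr_head (i j k : V) (hij : i ≠ j) (hik : i ≠ k) (hjk : j ≠ k) :
    ∑ α : V ≃ Fin n, sg α (j, i) * sg α (k, i)
      = (Fintype.card (V ≃ Fin n) : ℝ) / 3 := by
  have hpt : ∀ α : V ≃ Fin n, sg α (j, i) * sg α (k, i) = 1 - 2 * mid α i j k := by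
    intro α
    unfold sg mid
    simp only [Fin.lt_def]
    exact prod_nat_head _ _ _ (val_ne hij) (val_ne hik)
  rw [Fintype.sum_congr _ _ hpt, Finset.sum_sub_distrib, Finset.sum_const,
    ← Finset.mul_sum, mid_sum i j k hij hik hjk]
  simp only [card_univ, nsmul_eq_mul, mul_one]
  ring

private lemma corr_path (i j k : V) (hij : i ≠ j) (hik : i ≠ k) (hjk : j ≠ k) :
    ∑ α : V ≃ Fin n, sg α (i, j) * sg α (j, k)
      = -((Fintype.card (V ≃ Fin n) : ℝ) / 3) := by
  have hpt : ∀ α : V ≃ Fin n, sg α (i, j) * sg α (j, k) = 2 * mid α j i k - 1 := by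
    intro α
    unfold sg mid
    simp only [Fin.lt_def]
    exact prod_nat_path _ _ _ (val_ne hij) (val_ne hjk)
  rw [Fintype.sum_congr _ _ hpt, Finset.sum_sub_distrib, Finset.sum_const,
    ← Finset.mul_sum, mid_sum j i k (Ne.symm hij) hjk hik]
  simp only [card_univ, nsmul_eq_mul, mul_one]
  ring

private lemma corr_diag (a : V × V) :
    ∑ α : V ≃ Fin n, sg α a * sg α a = (Fintype.card (V ≃ Fin n) : ℝ) := by
  have hpt : ∀ α : V ≃ Fin n, sg α a * sg α a = 1 := by
    intro α; unfold sg; split_ifs <;> norm_num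
  rw [Fintype.sum_congr _ _ hpt]
  simp [card_univ]

private def dv (v : V) (a : V × V) : ℝ :=
  (if a.1 = v then 1 else 0) - (if a.2 = v then 1 else 0)

private lemma sum_ind (x y : V) :
    ∑ v : V, (if x = v then (1:ℝ) else 0) * (if y = v then 1 else 0)
      = if x = y then 1 else 0 := by
  simp only [ite_mul, one_mul, zero_mul, Finset.sum_ite_eq, Finset.mem_univ, if_true]
  by_cases h : x = y
  · simp [h]
  · rw [if_neg (fun hh : y = x => h hh.symm), if_neg h]

private lemma sum_dv (a b : V × V) :
    ∑ v : V, dv v a * dv v b =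
      (if a.1 = b.1 then (1:ℝ) else 0) - (if a.1 = b.2 then 1 else 0)
      - (if a.2 = b.1 then 1 else 0) + (if a.2 = b.2 then 1 else 0) := by
  have hpt : ∀ v : V, dv v a * dv v b =
      (if a.1 = v then (1:ℝ) else 0) * (if b.1 = v then 1 else 0)
      - (if a.1 = v then (1:ℝ) else 0) * (if b.2 = v then 1 else 0)
      - ((if a.2 = v then (1:ℝ) else 0) * (if b.1 = v then 1 else 0)
         - (if a.2 = v then (1:ℝ) else 0) * (if b.2 = v then 1 else 0)) := by
    intro v; unfold dv; ring
  rw [Fintype.sum_congr _ _ hpt, Finset.sum_sub_distrib, Finset.sum_sub_distrib,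
    Finset.sum_sub_distrib, sum_ind, sum_ind, sum_ind, sum_ind]
  ring

private lemma corr_eq (A : Finset (V × V)) (hloop : ∀ a ∈ A, a.1 ≠ a.2)
    (horient : ∀ a ∈ A, (a.2, a.1) ∉ A) (a : V × V) (b : V × V)
    (ha : a ∈ A) (hb : b ∈ A) :
    ∑ α : V ≃ Fin n, sg α a * sg α b
      = ((Fintype.card (V ≃ Fin n) : ℝ) / 3) *
        ((∑ v : V, dv v a * dv v b) + if a = b then 1 else 0) := by
  by_cases hab : a = b
  · subst hab
    have h1 := hloop a ha
    rw [corr_diag, sum_dv]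
    simp only [if_pos rfl, if_neg h1, if_neg h1.symm]
    norm_num
  · obtain ⟨i, j⟩ := a
    obtain ⟨k, l⟩ := b
    have hij : i ≠ j := hloop _ ha
    have hkl : k ≠ l := hloop _ hb
    have hopp : ¬(i = l ∧ j = k) := by
      rintro ⟨rfl, rfl⟩
      exact horient _ hb ha
    rw [sum_dv, if_neg hab]
    simp only
    by_cases h1 : i = k
    · subst h1
      have h2 : j ≠ l := fun h => hab (by rw [h])
      rw [corr_tail i j l hij hkl h2]
      simp [hkl, hij.symm, h2]
    · by_cases h2 : j = l
      · subst h2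
        rw [corr_head j i k hij.symm hkl.symm h1]
        simp [h1, hij, hkl.symm]
      · by_cases h3 : j = k
        · subst h3
          have h4 : i ≠ l := fun h => hopp ⟨h, rfl⟩
          rw [corr_path i j l hij h4 hkl]
          simp only [if_neg hij, if_neg h4, if_pos rfl, if_neg hkl]
          norm_num
        · by_cases h4 : i = l
          · subst h4
            have hptc : ∀ α : V ≃ Fin n, sg α (i, j) * sg α (k, i)
                = sg α (k, i) * sg α (i, j) := fun α => mul_comm _ _
            rw [Fintype.sum_congr _ _ hptc,
              corr_path k i j hkl (fun h => h3 h.symm) hij]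
            simp only [if_neg h1, if_pos rfl, if_neg h3, if_neg hij.symm]
            norm_num
          · rw [corr_disjoint i j k l hij (fun h => h1 h.symm) (fun h => h3 h.symm)
              (fun h => h4 h.symm) (fun h => h2 h.symm)]
            simp only [if_neg h1, if_neg h4, if_neg h3, if_neg h2]
            ring

end Aux

/- For an oriented graph with positive arc weights and
`X(α) = (1/2) Σ_{ij∈A} ε_ij(α)` (where `ε_ij(α) = ±w_ij` according to whether
`α(i) < α(j)`), over a uniformly random bijection `α : V ≃ Fin n` we have
`E(X²) ≥ W⁽²⁾/12` where `W⁽²⁾ = Σ_{ij∈A} w_ij²`. -/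
theorem stmt_5 {V : Type} [Fintype V] [DecidableEq V] (A : Finset (V × V))
    (w : V × V → ℝ) (hloop : ∀ a ∈ A, a.1 ≠ a.2)
    (horient : ∀ a ∈ A, (a.2, a.1) ∉ A) (hw : ∀ a ∈ A, 0 < w a)
    (X : (V ≃ Fin (Fintype.card V)) → ℝ)
    (hX : ∀ α, X α = (1 / 2) * ∑ a ∈ A, (if α a.1 < α a.2 then w a else - w a)) :
    (∑ a ∈ A, w a ^ 2) / 12 ≤
      (∑ α : V ≃ Fin (Fintype.card V), X α ^ 2)
        / (Fintype.card (V ≃ Fin (Fintype.card V)) : ℝ) := by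
  classical
  have hN0 : 0 < Fintype.card (V ≃ Fin (Fintype.card V)) :=
    Fintype.card_pos_iff.mpr ⟨Fintype.equivFin V⟩
  have hNpos : (0:ℝ) < (Fintype.card (V ≃ Fin (Fintype.card V)) : ℝ) := by exact_mod_cast hN0
  have hXsq : ∀ α : V ≃ Fin (Fintype.card V), X α ^ 2
      = (1/4) * ∑ a ∈ A, ∑ b ∈ A, (w a * w b) * (sg α a * sg α b) := by
    intro α
    rw [hX α]
    have hterm : ∀ a ∈ A, (if α a.1 < α a.2 then w a else - w a) = w a * sg α a := by
      intro a _; unfold sg; split_ifs <;> ring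
    rw [Finset.sum_congr rfl hterm]
    have expand : (∑ a ∈ A, w a * sg α a) ^ 2
        = ∑ a ∈ A, ∑ b ∈ A, (w a * w b) * (sg α a * sg α b) := by
      rw [sq, Finset.sum_mul_sum]
      exact Finset.sum_congr rfl fun a _ => Finset.sum_congr rfl fun b _ => by ring
    rw [mul_pow, expand]
    norm_num
  have key : ∑ α : V ≃ Fin (Fintype.card V), X α ^ 2
      = (1/4) * ∑ a ∈ A, ∑ b ∈ A, (w a * w b) *
          (((Fintype.card (V ≃ Fin (Fintype.card V)) : ℝ) / 3) *
            ((∑ v : V, dv v a * dv v b) + if a = b then 1 else 0)) := by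
    rw [Fintype.sum_congr _ _ hXsq, ← Finset.mul_sum]
    congr 1
    rw [Finset.sum_comm]
    refine Finset.sum_congr rfl fun a ha => ?_
    rw [Finset.sum_comm]
    refine Finset.sum_congr rfl fun b hb => ?_
    rw [← Finset.mul_sum, corr_eq A hloop horient a b ha hb]
  have hdiag : ∀ a ∈ A, (∑ b ∈ A, (w a * w b) * (if a = b then (1:ℝ) else 0)) = w a ^ 2 := by
    intro a ha
    have h : ∀ b ∈ A, (w a * w b) * (if a = b then (1:ℝ) else 0)
        = if a = b then w a * w b else 0 := by
      intro b _; split_ifs <;> ring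
    rw [Finset.sum_congr rfl h, Finset.sum_ite_eq A a (fun b => w a * w b), if_pos ha]
    ring
  have hquad : ∑ a ∈ A, ∑ b ∈ A, (w a * w b) * (∑ v : V, dv v a * dv v b)
      = ∑ v : V, (∑ a ∈ A, w a * dv v a) ^ 2 := by
    have h1 : ∀ a ∈ A, ∀ b ∈ A, (w a * w b) * (∑ v : V, dv v a * dv v b)
        = ∑ v : V, (w a * dv v a) * (w b * dv v b) := by
      intro a _ b _
      rw [Finset.mul_sum]
      exact Finset.sum_congr rfl fun v _ => by ring
    calc ∑ a ∈ A, ∑ b ∈ A, (w a * w b) * (∑ v : V, dv v a * dv v b)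
        = ∑ a ∈ A, ∑ b ∈ A, ∑ v : V, (w a * dv v a) * (w b * dv v b) :=
          Finset.sum_congr rfl fun a ha => Finset.sum_congr rfl fun b hb => h1 a ha b hb
      _ = ∑ a ∈ A, ∑ v : V, ∑ b ∈ A, (w a * dv v a) * (w b * dv v b) :=
          Finset.sum_congr rfl fun a _ => Finset.sum_comm
      _ = ∑ v : V, ∑ a ∈ A, ∑ b ∈ A, (w a * dv v a) * (w b * dv v b) := Finset.sum_comm
      _ = ∑ v : V, (∑ a ∈ A, w a * dv v a) ^ 2 := by
          refine Finset.sum_congr rfl fun v _ => ?_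
          rw [sq, Finset.sum_mul_sum]
  have split : ∑ a ∈ A, ∑ b ∈ A, (w a * w b) *
        (((Fintype.card (V ≃ Fin (Fintype.card V)) : ℝ) / 3) *
          ((∑ v : V, dv v a * dv v b) + if a = b then 1 else 0))
      = ((Fintype.card (V ≃ Fin (Fintype.card V)) : ℝ) / 3) *
          ((∑ v : V, (∑ a ∈ A, w a * dv v a) ^ 2) + ∑ a ∈ A, w a ^ 2) := by
    set N : ℝ := (Fintype.card (V ≃ Fin (Fintype.card V)) : ℝ) with hNdef
    have hpt : ∀ a ∈ A, ∀ b ∈ A, (w a * w b) *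
          ((N / 3) * ((∑ v : V, dv v a * dv v b) + if a = b then 1 else 0))
        = (N / 3) * ((w a * w b) * (∑ v : V, dv v a * dv v b)
            + (w a * w b) * (if a = b then 1 else 0)) := by
      intro a _ b _; ring
    calc ∑ a ∈ A, ∑ b ∈ A, (w a * w b) *
          ((N / 3) * ((∑ v : V, dv v a * dv v b) + if a = b then 1 else 0))
        = ∑ a ∈ A, ∑ b ∈ A, (N / 3) * ((w a * w b) * (∑ v : V, dv v a * dv v b)
            + (w a * w b) * (if a = b then 1 else 0)) :=
          Finset.sum_congr rfl fun a ha => Finset.sum_congr rfl fun b hb => hpt a ha b hb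
      _ = (N / 3) * ∑ a ∈ A, ∑ b ∈ A, ((w a * w b) * (∑ v : V, dv v a * dv v b)
            + (w a * w b) * (if a = b then 1 else 0)) := by
          rw [Finset.mul_sum]
          exact Finset.sum_congr rfl fun a _ => (Finset.mul_sum _ _ _).symm
      _ = (N / 3) * ((∑ a ∈ A, ∑ b ∈ A, (w a * w b) * (∑ v : V, dv v a * dv v b))
            + ∑ a ∈ A, ∑ b ∈ A, (w a * w b) * (if a = b then 1 else 0)) := by
          congr 1
          rw [← Finset.sum_add_distrib]
          exact Finset.sum_congr rfl fun a _ => Finset.sum_add_distrib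
      _ = (N / 3) * ((∑ v : V, (∑ a ∈ A, w a * dv v a) ^ 2) + ∑ a ∈ A, w a ^ 2) := by
          rw [hquad, Finset.sum_congr rfl hdiag]
  have hQ : (0:ℝ) ≤ ∑ v : V, (∑ a ∈ A, w a * dv v a) ^ 2 :=
    Finset.sum_nonneg fun v _ => sq_nonneg _
  have hsum : ∑ α : V ≃ Fin (Fintype.card V), X α ^ 2
      = (1/4) * (((Fintype.card (V ≃ Fin (Fintype.card V)) : ℝ) / 3) *
          ((∑ v : V, (∑ a ∈ A, w a * dv v a) ^ 2) + ∑ a ∈ A, w a ^ 2)) := by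
    rw [key, split]
  rw [hsum, div_le_div_iff₀ (by norm_num) hNpos]
  nlinarith [hQ, hNpos]
end

section
/- Let D = (V, A) be an oriented graph with positive integral arc weights and total weight W, and let k be a positive integer. If Σ_{ij∈A} w_{ij}^2 ≥ 12k^2 then there exists an acyclic subdigraph of D of total weight at least W/2 + k. In particular, since weights are integral, if |A| ≥ 12k^2 then such a subdigraph exists. -/
open Finset

/-- A directed cycle in the arc set `A`: a closed walk of length ≥ 1. -/
def HasDirCycle {V : Type} (A : Finset (V × V)) : Prop :=
  ∃ (v : V) (l : List V), List.Chain (fun x y => (x, y) ∈ A) v (l ++ [v])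

set_option linter.unusedSectionVars false

namespace Stmt7

variable {V : Type} [Fintype V] [DecidableEq V]

noncomputable def eps {n : ℕ} (σ : V ≃ Fin n) (p q : V) : ℝ :=
  if σ p < σ q then 1 else -1

lemma eps_flip {n : ℕ} (σ : V ≃ Fin n) {p q : V} (h : p ≠ q) :
    eps σ q p = - eps σ p q := by
  have hne : σ p ≠ σ q := fun hc => h (σ.injective hc)
  unfold eps
  rcases lt_trichotomy (σ p) (σ q) with h1 | h1 | h1
  · rw [if_neg (asymm h1), if_pos h1]
  · exact absurd h1 hne
  · rw [if_pos h1, if_neg (asymm h1)]; norm_num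

lemma eps_sq {n : ℕ} (σ : V ≃ Fin n) (p q : V) :
    eps σ p q * eps σ p q = 1 := by
  unfold eps; split_ifs <;> norm_num

lemma tri_aux (a b c : ℕ) (hab : a ≠ b) (hac : a ≠ c) (hbc : b ≠ c) :
    (if a < b then (1:ℝ) else -1) * (if a < c then 1 else -1)
    + (if b < a then (1:ℝ) else -1) * (if b < c then 1 else -1)
    + (if c < a then (1:ℝ) else -1) * (if c < b then 1 else -1) = 1 := by
  split_ifs <;> norm_num <;> omega

lemma eps_triple {n : ℕ} (σ : V ≃ Fin n) {u v x : V} (huv : u ≠ v) (hux : u ≠ x)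
    (hvx : v ≠ x) :
    eps σ u v * eps σ u x + eps σ v u * eps σ v x + eps σ x u * eps σ x v = 1 := by
  have h1 : (σ u : ℕ) ≠ (σ v : ℕ) := fun hc => huv (σ.injective (Fin.ext hc))
  have h2 : (σ u : ℕ) ≠ (σ x : ℕ) := fun hc => hux (σ.injective (Fin.ext hc))
  have h3 : (σ v : ℕ) ≠ (σ x : ℕ) := fun hc => hvx (σ.injective (Fin.ext hc))
  have := tri_aux (σ u : ℕ) (σ v : ℕ) (σ x : ℕ) h1 h2 h3
  simp only [eps, Fin.lt_def]
  exact this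

noncomputable def swapEquiv (n : ℕ) (u v : V) : (V ≃ Fin n) ≃ (V ≃ Fin n) where
  toFun σ := (Equiv.swap u v).trans σ
  invFun σ := (Equiv.swap u v).trans σ
  left_inv σ := by ext x; simp
  right_inv σ := by ext x; simp

lemma eps_swapEquiv {n : ℕ} (u v : V) (σ : V ≃ Fin n) (p q : V) :
    eps (swapEquiv n u v σ) p q = eps σ (Equiv.swap u v p) (Equiv.swap u v q) := rfl

lemma sum_eps_pivot {n : ℕ} {u v x : V} (huv : u ≠ v) (hux : u ≠ x) (hvx : v ≠ x) :
    3 * ∑ σ : V ≃ Fin n, eps σ u v * eps σ u x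
      = (Fintype.card (V ≃ Fin n) : ℝ) := by
  have h2 : ∑ σ : V ≃ Fin n, eps σ v u * eps σ v x
      = ∑ σ : V ≃ Fin n, eps σ u v * eps σ u x := by
    rw [← Equiv.sum_comp (swapEquiv n u v)
      (fun σ => eps σ v u * eps σ v x)]
    refine Finset.sum_congr rfl fun σ _ => ?_
    rw [eps_swapEquiv, eps_swapEquiv, Equiv.swap_apply_right, Equiv.swap_apply_left,
      Equiv.swap_apply_of_ne_of_ne hux.symm hvx.symm]
  have h3 : ∑ σ : V ≃ Fin n, eps σ x u * eps σ x v
      = ∑ σ : V ≃ Fin n, eps σ u v * eps σ u x := by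
    rw [← Equiv.sum_comp (swapEquiv n u x)
      (fun σ => eps σ x u * eps σ x v)]
    refine Finset.sum_congr rfl fun σ _ => ?_
    rw [eps_swapEquiv, eps_swapEquiv, Equiv.swap_apply_right, Equiv.swap_apply_left,
      Equiv.swap_apply_of_ne_of_ne huv.symm hvx]
    ring
  have key : ∑ σ : V ≃ Fin n,
      (eps σ u v * eps σ u x + eps σ v u * eps σ v x + eps σ x u * eps σ x v)
      = (Fintype.card (V ≃ Fin n) : ℝ) := by
    rw [Finset.sum_congr rfl fun σ _ => eps_triple σ huv hux hvx]
    simp [Finset.card_univ]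
  rw [Finset.sum_add_distrib, Finset.sum_add_distrib, h2, h3] at key
  linarith


noncomputable def dd (a : V × V) (v : V) : ℝ :=
  (if a.1 = v then 1 else 0) - (if a.2 = v then 1 else 0)

lemma ind_sum (p q : V) :
    ∑ v : V, (if p = v then (1:ℝ) else 0) * (if q = v then 1 else 0)
      = if p = q then 1 else 0 := by
  rw [Finset.sum_eq_single q]
  · simp [eq_comm]
  · intro v _ hv
    simp only [mul_ite, mul_one, mul_zero]
    rw [if_neg (fun h => hv h.symm)]
  · simp

lemma chi_eq (a b : V × V) :
    ∑ v : V, dd a v * dd b v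
      = ((if a.1 = b.1 then (1:ℝ) else 0) + (if a.2 = b.2 then 1 else 0))
        - ((if a.1 = b.2 then 1 else 0) + (if a.2 = b.1 then 1 else 0)) := by
  have expand : ∀ v : V, dd a v * dd b v
      = ((if a.1 = v then (1:ℝ) else 0) * (if b.1 = v then 1 else 0)
          + (if a.2 = v then (1:ℝ) else 0) * (if b.2 = v then 1 else 0))
        - ((if a.1 = v then (1:ℝ) else 0) * (if b.2 = v then 1 else 0)
          + (if a.2 = v then (1:ℝ) else 0) * (if b.1 = v then 1 else 0)) := by
    intro v; unfold dd; ring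
  rw [Finset.sum_congr rfl fun v _ => expand v, Finset.sum_sub_distrib,
    Finset.sum_add_distrib, Finset.sum_add_distrib, ind_sum, ind_sum, ind_sum, ind_sum]

lemma T_eq {n : ℕ} (A : Finset (V × V)) (hloop : ∀ a ∈ A, a.1 ≠ a.2)
    (horient : ∀ a ∈ A, (a.2, a.1) ∉ A) {a b : V × V} (ha : a ∈ A) (hb : b ∈ A) :
    3 * ∑ σ : V ≃ Fin n, eps σ a.1 a.2 * eps σ b.1 b.2
      = (Fintype.card (V ≃ Fin n) : ℝ)
          * ((∑ v : V, dd a v * dd b v) + if a = b then 1 else 0) := by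
  have hA : a.1 ≠ a.2 := hloop a ha
  have hB : b.1 ≠ b.2 := hloop b hb
  rw [chi_eq]
  by_cases hab : a = b
  · subst hab
    rw [Finset.sum_congr rfl fun σ _ => eps_sq σ a.1 a.2]
    simp [Finset.card_univ, hA, hA.symm, Ne.symm]
    ring
  by_cases h11 : a.1 = b.1
  · have h22 : a.2 ≠ b.2 := fun h => hab (Prod.ext h11 h)
    have h12 : a.1 ≠ b.2 := h11 ▸ hB
    have h21 : a.2 ≠ b.1 := fun h => hA (h11 ▸ h.symm ▸ rfl)
    rw [show ∑ σ : V ≃ Fin n, eps σ a.1 a.2 * eps σ b.1 b.2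
        = ∑ σ : V ≃ Fin n, eps σ a.1 a.2 * eps σ a.1 b.2 by rw [h11],
      sum_eps_pivot hA h12 h22]
    simp [hab, h11, h22, h12, h21, hA, hA.symm, hB, hB.symm]
  by_cases h22 : a.2 = b.2
  · have h12 : a.1 ≠ b.2 := h22 ▸ hA
    have h21 : a.2 ≠ b.1 := fun h => hB (h ▸ h22.symm ▸ rfl)
    have hstep : ∀ σ : V ≃ Fin n, eps σ a.1 a.2 * eps σ b.1 b.2
        = eps σ a.2 a.1 * eps σ a.2 b.1 := by
      intro σ
      rw [← h22, eps_flip σ hA.symm, eps_flip σ (h22 ▸ hB.symm : a.2 ≠ b.1).symm]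
      ring
    rw [Finset.sum_congr rfl fun σ _ => hstep σ,
      sum_eps_pivot hA.symm h21 h11]
    simp [hab, h11, h22, h12, h21, hA, hA.symm, hB, hB.symm]
  by_cases h21 : a.2 = b.1
  · have h12 : a.1 ≠ b.2 := by
      intro h
      exact horient b hb (by rw [← h, ← h21]; exact ha)
    have hstep : ∀ σ : V ≃ Fin n, eps σ a.1 a.2 * eps σ b.1 b.2
        = - (eps σ a.2 a.1 * eps σ a.2 b.2) := by
      intro σ
      rw [← h21, eps_flip σ hA.symm]
      ring
    have h2x : a.2 ≠ b.2 := h21 ▸ hB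
    rw [Finset.sum_congr rfl fun σ _ => hstep σ, Finset.sum_neg_distrib,
      show (3:ℝ) * - ∑ σ : V ≃ Fin n, eps σ a.2 a.1 * eps σ a.2 b.2
        = - (3 * ∑ σ : V ≃ Fin n, eps σ a.2 a.1 * eps σ a.2 b.2) by ring,
      sum_eps_pivot hA.symm h2x h12]
    simp [hab, h11, h22, h12, h21, hA, hA.symm, hB, hB.symm]
  by_cases h12 : a.1 = b.2
  · have hx : a.2 ≠ b.1 := h21
    have h1b : a.1 ≠ b.1 := h12 ▸ hB.symm
    have hstep : ∀ σ : V ≃ Fin n, eps σ a.1 a.2 * eps σ b.1 b.2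
        = - (eps σ a.1 a.2 * eps σ a.1 b.1) := by
      intro σ
      rw [show b.2 = a.1 from h12.symm, eps_flip σ h1b.symm]
      ring
    rw [Finset.sum_congr rfl fun σ _ => hstep σ, Finset.sum_neg_distrib,
      show (3:ℝ) * - ∑ σ : V ≃ Fin n, eps σ a.1 a.2 * eps σ a.1 b.1
        = - (3 * ∑ σ : V ≃ Fin n, eps σ a.1 a.2 * eps σ a.1 b.1) by ring,
      sum_eps_pivot hA h1b h21]
    simp [hab, h11, h22, h12, h21, hA, hA.symm, hB, hB.symm]
  · -- all four endpoints distinct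
    have key : ∑ σ : V ≃ Fin n, eps σ a.1 a.2 * eps σ b.1 b.2
        = - ∑ σ : V ≃ Fin n, eps σ a.1 a.2 * eps σ b.1 b.2 := by
      nth_rewrite 1 [← Equiv.sum_comp (swapEquiv n a.1 a.2)
        (fun σ => eps σ a.1 a.2 * eps σ b.1 b.2)]
      rw [← Finset.sum_neg_distrib]
      refine Finset.sum_congr rfl fun σ _ => ?_
      rw [eps_swapEquiv, eps_swapEquiv, Equiv.swap_apply_left, Equiv.swap_apply_right,
        Equiv.swap_apply_of_ne_of_ne (Ne.symm h11) (Ne.symm h21),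
        Equiv.swap_apply_of_ne_of_ne (Ne.symm h12) (Ne.symm h22),
        eps_flip σ hA.symm]
      ring
    have hzero : ∑ σ : V ≃ Fin n, eps σ a.1 a.2 * eps σ b.1 b.2 = 0 := by linarith
    rw [hzero]
    simp [hab, h11, h22, h12, h21, hA, hA.symm, hB, hB.symm]


lemma chain_mono {n : ℕ} (σ : V ≃ Fin n) (A' : Finset (V × V))
    (hA' : ∀ a ∈ A', σ a.1 < σ a.2) :
    ∀ (l : List V) (v z : V),
      List.Chain (fun x y => (x, y) ∈ A') v (l ++ [z]) → σ v < σ z := by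
  intro l
  induction l with
  | nil =>
    intro v z h
    rw [List.nil_append] at h
    rcases List.chain_cons.mp h with ⟨h1, _⟩
    exact hA' (v, z) h1
  | cons w t ih =>
    intro v z h
    rw [List.cons_append] at h
    rcases List.chain_cons.mp h with ⟨h1, h2⟩
    exact lt_trans (hA' (v, w) h1) (ih w z h2)

lemma no_cycle {n : ℕ} (σ : V ≃ Fin n) (A' : Finset (V × V))
    (hA' : ∀ a ∈ A', σ a.1 < σ a.2) : ¬ HasDirCycle A' := by
  rintro ⟨v, l, hch⟩
  exact lt_irrefl _ (chain_mono σ A' hA' l v v hch)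

lemma forward_sum {n : ℕ} (A : Finset (V × V)) (w : V × V → ℕ) (σ : V ≃ Fin n) :
    (∑ a ∈ A.filter (fun a => σ a.1 < σ a.2), (w a : ℝ))
      = ((∑ a ∈ A, (w a : ℝ)) + ∑ a ∈ A, (w a : ℝ) * eps σ a.1 a.2) / 2 := by
  have h1 := Finset.sum_filter_add_sum_filter_not A (fun a => σ a.1 < σ a.2)
    (fun a => (w a : ℝ))
  have h2 := Finset.sum_filter_add_sum_filter_not A (fun a => σ a.1 < σ a.2)
    (fun a => (w a : ℝ) * eps σ a.1 a.2)
  have e1 : ∑ a ∈ A.filter (fun a => σ a.1 < σ a.2), (w a : ℝ) * eps σ a.1 a.2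
      = ∑ a ∈ A.filter (fun a => σ a.1 < σ a.2), (w a : ℝ) := by
    refine Finset.sum_congr rfl fun a haf => ?_
    rw [eps, if_pos (Finset.mem_filter.mp haf).2, mul_one]
  have e2 : ∑ a ∈ A.filter (fun a => ¬ σ a.1 < σ a.2), (w a : ℝ) * eps σ a.1 a.2
      = - ∑ a ∈ A.filter (fun a => ¬ σ a.1 < σ a.2), (w a : ℝ) := by
    rw [← Finset.sum_neg_distrib]
    refine Finset.sum_congr rfl fun a haf => ?_
    rw [eps, if_neg (Finset.mem_filter.mp haf).2]
    ring
  rw [e1, e2] at h2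
  linarith

lemma good_of_f {n : ℕ} (A : Finset (V × V)) (w : V × V → ℕ) (k : ℕ)
    (σ : V ≃ Fin n)
    (hf : 2 * (k : ℝ) ≤ ∑ a ∈ A, (w a : ℝ) * eps σ a.1 a.2) :
    ∃ A' ⊆ A, ¬ HasDirCycle A' ∧
      ((∑ a ∈ A, (w a : ℝ)) / 2 + k ≤ ∑ a ∈ A', (w a : ℝ)) := by
  refine ⟨A.filter (fun a => σ a.1 < σ a.2), Finset.filter_subset _ _,
    no_cycle σ _ (fun a haf => (Finset.mem_filter.mp haf).2), ?_⟩
  rw [forward_sum A w σ]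
  linarith

lemma exists_good (A : Finset (V × V)) (w : V × V → ℕ)
    (hloop : ∀ a ∈ A, a.1 ≠ a.2) (horient : ∀ a ∈ A, (a.2, a.1) ∉ A) (k : ℕ)
    (h : (12 * k ^ 2 : ℝ) ≤ ∑ a ∈ A, (w a : ℝ) ^ 2) :
    ∃ A' ⊆ A, ¬ HasDirCycle A' ∧
      ((∑ a ∈ A, (w a : ℝ)) / 2 + k ≤ ∑ a ∈ A', (w a : ℝ)) := by
  set n := Fintype.card V with hn
  set N : ℝ := (Fintype.card (V ≃ Fin n) : ℝ) with hN
  set f : (V ≃ Fin n) → ℝ := fun σ => ∑ a ∈ A, (w a : ℝ) * eps σ a.1 a.2 with hf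
  have expand : ∀ σ : V ≃ Fin n, f σ * f σ
      = ∑ a ∈ A, ∑ b ∈ A, (w a : ℝ) * (w b : ℝ) * (eps σ a.1 a.2 * eps σ b.1 b.2) := by
    intro σ
    rw [hf]
    rw [Finset.sum_mul_sum]
    exact Finset.sum_congr rfl fun a _ => Finset.sum_congr rfl fun b _ => by ring
  have swap3 : ∑ σ : V ≃ Fin n, f σ * f σ
      = ∑ a ∈ A, ∑ b ∈ A, (w a : ℝ) * (w b : ℝ)
          * (∑ σ : V ≃ Fin n, eps σ a.1 a.2 * eps σ b.1 b.2) := by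
    rw [Finset.sum_congr rfl fun σ _ => expand σ, Finset.sum_comm]
    refine Finset.sum_congr rfl fun a _ => ?_
    rw [Finset.sum_comm]
    refine Finset.sum_congr rfl fun b _ => ?_
    rw [Finset.mul_sum]
  have tstep : 3 * ∑ σ : V ≃ Fin n, f σ * f σ
      = ∑ a ∈ A, ∑ b ∈ A, (w a : ℝ) * (w b : ℝ)
          * (N * ((∑ v : V, dd a v * dd b v) + if a = b then 1 else 0)) := by
    rw [swap3, Finset.mul_sum]
    refine Finset.sum_congr rfl fun a ha => ?_
    rw [Finset.mul_sum]
    refine Finset.sum_congr rfl fun b hb => ?_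
    rw [show (3:ℝ) * ((w a : ℝ) * (w b : ℝ)
          * (∑ σ : V ≃ Fin n, eps σ a.1 a.2 * eps σ b.1 b.2))
        = (w a : ℝ) * (w b : ℝ)
          * (3 * ∑ σ : V ≃ Fin n, eps σ a.1 a.2 * eps σ b.1 b.2) by ring,
      T_eq A hloop horient ha hb]
  have hQ : ∑ v : V, (∑ a ∈ A, (w a : ℝ) * dd a v) * (∑ a ∈ A, (w a : ℝ) * dd a v)
      = ∑ a ∈ A, ∑ b ∈ A, (w a : ℝ) * (w b : ℝ) * (∑ v : V, dd a v * dd b v) := by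
    rw [Finset.sum_congr rfl fun v (_ : v ∈ Finset.univ) => Finset.sum_mul_sum A A
      (fun a => (w a : ℝ) * dd a v) (fun b => (w b : ℝ) * dd b v),
      Finset.sum_comm]
    refine Finset.sum_congr rfl fun a _ => ?_
    rw [Finset.sum_comm]
    refine Finset.sum_congr rfl fun b _ => ?_
    rw [Finset.mul_sum]
    exact Finset.sum_congr rfl fun v _ => by ring
  have hD : ∑ a ∈ A, ∑ b ∈ A, (w a : ℝ) * (w b : ℝ) * (if a = b then (1:ℝ) else 0)
      = ∑ a ∈ A, (w a : ℝ) ^ 2 := by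
    refine Finset.sum_congr rfl fun a ha => ?_
    rw [Finset.sum_eq_single a]
    · rw [if_pos rfl]; ring
    · intro b _ hb; rw [if_neg (fun hh => hb hh.symm)]; ring
    · intro hna; exact absurd ha hna
  have key : N * (∑ a ∈ A, (w a : ℝ) ^ 2) ≤ 3 * ∑ σ : V ≃ Fin n, f σ * f σ := by
    have hsplit : 3 * ∑ σ : V ≃ Fin n, f σ * f σ
        = N * (∑ v : V, (∑ a ∈ A, (w a : ℝ) * dd a v) * (∑ a ∈ A, (w a : ℝ) * dd a v))
          + N * ∑ a ∈ A, (w a : ℝ) ^ 2 := by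
      rw [tstep]
      calc ∑ a ∈ A, ∑ b ∈ A, (w a : ℝ) * (w b : ℝ)
              * (N * ((∑ v : V, dd a v * dd b v) + if a = b then 1 else 0))
          = ∑ a ∈ A, ∑ b ∈ A,
              (N * ((w a : ℝ) * (w b : ℝ) * (∑ v : V, dd a v * dd b v))
                + N * ((w a : ℝ) * (w b : ℝ) * (if a = b then 1 else 0))) :=
            Finset.sum_congr rfl fun a _ => Finset.sum_congr rfl fun b _ => by ring
        _ = N * (∑ a ∈ A, ∑ b ∈ A, (w a : ℝ) * (w b : ℝ) * (∑ v : V, dd a v * dd b v))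
            + N * (∑ a ∈ A, ∑ b ∈ A, (w a : ℝ) * (w b : ℝ) * (if a = b then (1:ℝ) else 0)) := by
            rw [Finset.mul_sum, Finset.mul_sum, ← Finset.sum_add_distrib]
            refine Finset.sum_congr rfl fun a _ => ?_
            rw [Finset.mul_sum, Finset.mul_sum, ← Finset.sum_add_distrib]
        _ = N * (∑ v : V, (∑ a ∈ A, (w a : ℝ) * dd a v) * (∑ a ∈ A, (w a : ℝ) * dd a v))
            + N * ∑ a ∈ A, (w a : ℝ) ^ 2 := by rw [hQ, hD]
    have hsq : 0 ≤ ∑ v : V, (∑ a ∈ A, (w a : ℝ) * dd a v) * (∑ a ∈ A, (w a : ℝ) * dd a v) :=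
      Finset.sum_nonneg fun v _ => mul_self_nonneg _
    have hNpos : 0 ≤ N := by positivity
    nlinarith
  have hNpos : 0 < N := by
    rw [hN]
    have : 0 < Fintype.card (V ≃ Fin n) := Fintype.card_pos_iff.mpr ⟨Fintype.equivFin V⟩
    exact_mod_cast this
  have havg : ∑ σ : V ≃ Fin n, (4 * (k:ℝ)^2) ≤ ∑ σ : V ≃ Fin n, f σ * f σ := by
    rw [Finset.sum_const, Finset.card_univ, nsmul_eq_mul]
    nlinarith
  have hne : (Finset.univ : Finset (V ≃ Fin n)).Nonempty :=
    ⟨Fintype.equivFin V, Finset.mem_univ _⟩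
  obtain ⟨σ, _, hσ⟩ := Finset.exists_le_of_sum_le hne havg
  have hcase : 2 * (k : ℝ) ≤ f σ ∨ f σ ≤ -(2 * (k : ℝ)) := by
    by_contra hc
    push_neg at hc
    obtain ⟨hc1, hc2⟩ := hc
    nlinarith
  rcases hcase with hpos | hneg
  · exact good_of_f A w k σ hpos
  · set σ' : V ≃ Fin n := σ.trans (Fin.revPerm) with hσ'
    have hflip : f σ' = - f σ := by
      rw [hf, ← Finset.sum_neg_distrib]
      refine Finset.sum_congr rfl fun a ha => ?_
      have hne2 : σ a.1 ≠ σ a.2 := fun hcc => hloop a ha (σ.injective hcc)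
      have : eps σ' a.1 a.2 = - eps σ a.1 a.2 := by
        unfold eps
        simp only [hσ', Equiv.trans_apply, Fin.revPerm_apply, Fin.rev_lt_rev]
        rcases lt_trichotomy (σ a.1) (σ a.2) with h1 | h1 | h1
        · rw [if_neg (asymm h1), if_pos h1]
        · exact absurd h1 hne2
        · rw [if_pos h1, if_neg (asymm h1)]; norm_num
      rw [this]; ring
    refine good_of_f A w k σ' ?_
    have h2 : (2 : ℝ) * k ≤ f σ' := by rw [hflip]; linarith
    simpa [hf] using h2

end Stmt7

/- For an oriented graph with positive integral arc weights and a positive integer `k`: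
if `Σ w_ij² ≥ 12k²` then there is an acyclic subdigraph of weight at least `W/2 + k`;
in particular (as the weights are integral), the same holds if `|A| ≥ 12k²`. -/
theorem stmt_7 {V : Type} [Fintype V] [DecidableEq V] (A : Finset (V × V))
    (w : V × V → ℕ) (hloop : ∀ a ∈ A, a.1 ≠ a.2)
    (horient : ∀ a ∈ A, (a.2, a.1) ∉ A) (hw : ∀ a ∈ A, 0 < w a)
    (k : ℕ) (hk : 0 < k) :
    ((12 * k ^ 2 : ℝ) ≤ ∑ a ∈ A, (w a : ℝ) ^ 2 →
      ∃ A' ⊆ A, ¬ HasDirCycle A' ∧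
        ((∑ a ∈ A, (w a : ℝ)) / 2 + k ≤ ∑ a ∈ A', (w a : ℝ))) ∧
    (12 * k ^ 2 ≤ A.card →
      ∃ A' ⊆ A, ¬ HasDirCycle A' ∧
        ((∑ a ∈ A, (w a : ℝ)) / 2 + k ≤ ∑ a ∈ A', (w a : ℝ))) := by
  constructor
  · intro h
    exact Stmt7.exists_good A w hloop horient k h
  · intro h
    apply Stmt7.exists_good A w hloop horient k
    have h1 : (12 * (k:ℝ) ^ 2) ≤ (A.card : ℝ) := by exact_mod_cast h
    have h2 : (A.card : ℝ) ≤ ∑ a ∈ A, (w a : ℝ) ^ 2 := by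
      calc (A.card : ℝ) = ∑ _a ∈ A, (1:ℝ) := by
            rw [Finset.sum_const, nsmul_eq_mul, mul_one]
        _ ≤ ∑ a ∈ A, (w a : ℝ) ^ 2 := by
            refine Finset.sum_le_sum fun a ha => ?_
            have hwa : (1:ℝ) ≤ (w a : ℝ) := by exact_mod_cast hw a ha
            nlinarith
    linarith
end

section
/- Let S be a weighted GF(2)-system of m equations with distinct equation index sets, positive integral weights, and a set U of variables such that each equation contains an odd number of variables from U. If m ≥ 4k^2 (k a positive integer), then there is an assignment of values to the variables such that the total weight of satisfied equations is at least W/2 + k, where W is the total weight. -/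
open Finset



noncomputable def chi (a : ZMod 2) : ℝ := if a = 0 then 1 else -1

lemma chi_add (a c : ZMod 2) : chi (a + c) = chi a * chi c := by
  rcases (by decide : ∀ x : ZMod 2, x = 0 ∨ x = 1) a with rfl | rfl <;>
    rcases (by decide : ∀ x : ZMod 2, x = 0 ∨ x = 1) c with rfl | rfl <;> simp +decide [chi]

lemma chi_zero : chi 0 = 1 := by simp [chi]
lemma chi_one : chi 1 = -1 := by simp [chi]

lemma chi_sq (a : ZMod 2) : chi a * chi a = 1 := by
  rcases (by decide : ∀ x : ZMod 2, x = 0 ∨ x = 1) a with rfl | rfl <;> simp +decide [chi]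

lemma sum_chi_zero {n : ℕ} (A : Finset (Fin n)) (hA : A.Nonempty) :
    ∑ z : Fin n → ZMod 2, chi (∑ i ∈ A, z i) = 0 := by
  obtain ⟨i0, hi0⟩ := hA
  set σ : (Fin n → ZMod 2) → (Fin n → ZMod 2) :=
    fun z => Function.update z i0 (z i0 + 1) with hσ
  have hinv : Function.Involutive σ := by
    intro z; funext i
    by_cases h : i = i0
    · subst h; simp [hσ, Function.update_self]
      rw [add_assoc, show ((1:ZMod 2) + 1) = 0 by decide, add_zero]
    · simp [hσ, Function.update_of_ne h]
  have hflip : ∀ z, chi (∑ i ∈ A, σ z i) = - chi (∑ i ∈ A, z i) := by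
    intro z
    have h1 : ∑ i ∈ A, σ z i = (∑ i ∈ A, z i) + 1 := by
      rw [hσ]
      rw [Finset.sum_update_of_mem hi0, Finset.sum_eq_sum_sdiff_singleton_add hi0 z]
      ring
    rw [h1, chi_add, chi_one]; ring
  have hsum : ∑ z : Fin n → ZMod 2, chi (∑ i ∈ A, z i)
      = ∑ z : Fin n → ZMod 2, chi (∑ i ∈ A, σ z i) :=
    (Fintype.sum_bijective σ hinv.bijective _ _ (fun z => rfl)).symm
  simp only [hflip, Finset.sum_neg_distrib] at hsum
  linarith

lemma sum_eq_symmDiff {n : ℕ} (A B : Finset (Fin n)) (z : Fin n → ZMod 2) :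
    (∑ i ∈ A, z i) + (∑ i ∈ B, z i) = ∑ i ∈ symmDiff A B, z i := by
  classical
  have h1 : (∑ i ∈ A, z i) + (∑ i ∈ B, z i)
      = (∑ i ∈ A ∪ B, z i) + (∑ i ∈ A ∩ B, z i) := by
    rw [Finset.sum_union_inter]
  have h2 : symmDiff A B = (A ∪ B) \ (A ∩ B) := by
    rw [symmDiff_eq_sup_sdiff_inf]
    simp [Finset.sup_eq_union, Finset.inf_eq_inter]
  have h3 : (∑ i ∈ A ∪ B, z i) = (∑ i ∈ (A ∪ B) \ (A ∩ B), z i) + ∑ i ∈ A ∩ B, z i := by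
    rw [Finset.sum_sdiff (Finset.inter_subset_union)]
  rw [h1, h3, ← h2, add_assoc, CharTwo.add_self_eq_zero, add_zero]

lemma key_sum {n : ℕ} (A B : Finset (Fin n)) :
    ∑ z : Fin n → ZMod 2, chi (∑ i ∈ A, z i) * chi (∑ i ∈ B, z i)
      = if A = B then (2:ℝ)^n else 0 := by
  have h : ∀ z : Fin n → ZMod 2,
      chi (∑ i ∈ A, z i) * chi (∑ i ∈ B, z i) = chi (∑ i ∈ symmDiff A B, z i) := by
    intro z; rw [← sum_eq_symmDiff, chi_add]
  simp only [h]
  by_cases hAB : A = B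
  · subst hAB
    rw [if_pos rfl]
    have h1 : ∀ z : Fin n → ZMod 2, chi (∑ i ∈ symmDiff A A, z i) = 1 := by
      intro z; rw [symmDiff_self]; simp [chi_zero]
    simp only [h1, Finset.sum_const, Finset.card_univ, nsmul_eq_mul, mul_one]
    rw [show (Fintype.card (Fin n → ZMod 2)) = 2^n by
      rw [Fintype.card_fun]; simp]
    push_cast; ring
  · rw [if_neg hAB]
    apply sum_chi_zero
    rw [Finset.nonempty_iff_ne_empty]
    intro hemp
    exact hAB (by rwa [← Finset.bot_eq_empty, symmDiff_eq_bot] at hemp)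

/- Weighted GF(2) system with distinct nonempty index sets, positive integral
weights, and a set `U` of variables meeting every equation in an odd number of
variables: if `m ≥ 4k²` then some assignment satisfies equations of total
weight at least `W/2 + k`. -/
theorem stmt_13 (n m : ℕ) (I : Fin m → Finset (Fin n)) (b : Fin m → ZMod 2)
    (w : Fin m → ℕ) (hI : ∀ j, (I j).Nonempty) (hw : ∀ j, 0 < w j)
    (hdist : Function.Injective I)
    (U : Finset (Fin n)) (hU : ∀ j, (I j ∩ U).card % 2 = 1)
    (k : ℕ) (hk : 0 < k) (hm : 4 * k ^ 2 ≤ m) :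
    ∃ z : Fin n → ZMod 2,
      (∑ j, (w j : ℝ)) / 2 + k ≤
        ∑ j ∈ univ.filter (fun j => ∑ i ∈ I j, z i = b j), (w j : ℝ) := by
  classical
  set X : (Fin n → ZMod 2) → ℝ :=
    fun z => ∑ j, (w j : ℝ) * chi (b j) * chi (∑ i ∈ I j, z i) with hX
  -- Step 1: second moment
  have hsq : ∑ z : Fin n → ZMod 2, (X z)^2 = (2:ℝ)^n * ∑ j, (w j:ℝ)^2 := by
    have expand : ∀ z, (X z)^2 = ∑ j, ∑ j',
        ((w j:ℝ)*chi (b j)*((w j':ℝ)*chi (b j'))) *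
          (chi (∑ i ∈ I j, z i) * chi (∑ i ∈ I j', z i)) := by
      intro z; rw [hX, sq, Finset.sum_mul_sum]
      exact Finset.sum_congr rfl fun j _ => Finset.sum_congr rfl fun j' _ => by ring
    calc ∑ z : Fin n → ZMod 2, (X z)^2
        = ∑ j, ∑ j', ∑ z : Fin n → ZMod 2,
            ((w j:ℝ)*chi (b j)*((w j':ℝ)*chi (b j'))) *
              (chi (∑ i ∈ I j, z i) * chi (∑ i ∈ I j', z i)) := by
          simp only [expand]
          rw [Finset.sum_comm]
          exact Finset.sum_congr rfl fun j _ => Finset.sum_comm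
      _ = ∑ j, ∑ j', ((w j:ℝ)*chi (b j)*((w j':ℝ)*chi (b j'))) *
            (if I j = I j' then (2:ℝ)^n else 0) := by
          simp only [← Finset.mul_sum, key_sum]
      _ = ∑ j, (w j:ℝ)^2 * (2:ℝ)^n := by
          refine Finset.sum_congr rfl fun j _ => ?_
          rw [Finset.sum_eq_single j]
          · rw [if_pos rfl,
              show (w j:ℝ)*chi (b j)*((w j:ℝ)*chi (b j))
                = (w j:ℝ)^2 * (chi (b j) * chi (b j)) by ring, chi_sq, mul_one]
          · intro j' _ hne
            rw [if_neg (fun h => hne (hdist h.symm)), mul_zero]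
          · intro h; exact absurd (Finset.mem_univ j) h
      _ = (2:ℝ)^n * ∑ j, (w j:ℝ)^2 := by rw [← Finset.sum_mul]; ring
  -- Step 2: some z0 has large |X|
  have hwsum : (4:ℝ) * k^2 ≤ ∑ j, (w j:ℝ)^2 := by
    calc (4:ℝ) * k^2 ≤ (m:ℝ) := by exact_mod_cast hm
      _ = ∑ _j : Fin m, (1:ℝ) := by simp
      _ ≤ ∑ j, (w j:ℝ)^2 := by
          refine Finset.sum_le_sum fun j _ => ?_
          have h1 : (1:ℝ) ≤ (w j:ℝ) := by exact_mod_cast hw j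
          nlinarith
  have hex : ∃ z0 : Fin n → ZMod 2, (2*(k:ℝ))^2 ≤ (X z0)^2 := by
    by_contra hcon
    push_neg at hcon
    have hlt : ∑ z : Fin n → ZMod 2, (X z)^2
        < ∑ _z : Fin n → ZMod 2, (2*(k:ℝ))^2 :=
      Finset.sum_lt_sum_of_nonempty Finset.univ_nonempty fun z _ => hcon z
    rw [Finset.sum_const, Finset.card_univ,
      show (Fintype.card (Fin n → ZMod 2)) = 2^n by rw [Fintype.card_fun]; simp,
      nsmul_eq_mul] at hlt
    push_cast at hlt
    rw [hsq] at hlt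
    have h2n : (0:ℝ) < 2^n := by positivity
    nlinarith
  obtain ⟨z0, hz0⟩ := hex
  -- Step 3: symmetry via U
  have hflipU : ∀ z' : Fin n → ZMod 2,
      X (fun i => z' i + (if i ∈ U then 1 else 0)) = - X z' := by
    intro z'
    rw [hX, ← Finset.sum_neg_distrib]
    refine Finset.sum_congr rfl fun j _ => ?_
    have hs : ∑ i ∈ I j, (z' i + (if i ∈ U then (1:ZMod 2) else 0))
        = (∑ i ∈ I j, z' i) + 1 := by
      rw [Finset.sum_add_distrib]
      congr 1
      rw [Finset.sum_ite_mem, Finset.sum_const, nsmul_eq_mul, mul_one,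
        ← ZMod.natCast_mod, hU j, Nat.cast_one]
    rw [hs, chi_add, chi_one]; ring
  have hbig : ∃ z : Fin n → ZMod 2, 2*(k:ℝ) ≤ X z := by
    by_cases hpos : 0 ≤ X z0
    · exact ⟨z0, by nlinarith⟩
    · refine ⟨fun i => z0 i + (if i ∈ U then 1 else 0), ?_⟩
      rw [hflipU z0]
      nlinarith
  obtain ⟨z, hz⟩ := hbig
  refine ⟨z, ?_⟩
  -- Step 4: satisfied weight = (W + X z)/2
  have hsat : ∑ j ∈ univ.filter (fun j => ∑ i ∈ I j, z i = b j), (w j : ℝ)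
      = (∑ j, (w j:ℝ))/2 + X z / 2 := by
    rw [Finset.sum_filter]
    have hterm : ∀ j, (if (∑ i ∈ I j, z i) = b j then (w j:ℝ) else 0)
        = (w j:ℝ)/2 + ((w j:ℝ) * chi (b j) * chi (∑ i ∈ I j, z i))/2 := by
      intro j
      by_cases hsj : (∑ i ∈ I j, z i) = b j
      · rw [if_pos hsj, hsj, mul_assoc, chi_sq]; ring
      · rw [if_neg hsj]
        have hchi : chi (b j) * chi (∑ i ∈ I j, z i) = -1 := by
          rw [← chi_add]
          have hne : b j + ∑ i ∈ I j, z i ≠ 0 := by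
            intro h0
            apply hsj
            have h1 : ∑ i ∈ I j, z i = - b j := eq_neg_of_add_eq_zero_right h0
            rwa [CharTwo.neg_eq] at h1
          simp [chi, hne]
        rw [mul_assoc, hchi]; ring
    simp only [hterm]
    rw [Finset.sum_add_distrib, ← Finset.sum_div, ← Finset.sum_div, hX]
  rw [hsat]
  linarith
end

section
/- Consider the GF(2)-system S_n consisting of the equations Σ_{i∈I} z_i = 1 for every nonempty subset I of {1,...,n}, all with weight 1, so m = 2^n − 1. With X = Σ_{∅≠I⊆{1,...,n}} (−1) Π_{i∈I} ε_i for independent uniform ±1 variables ε_i, we have E(X^2) = m and, for n ≥ 3, E(X^4) > (E(X^2))^3 / 8^3. -/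
open Finset

/- The system `S_n` consisting of `Σ_{i∈I} z_i = 1` for every nonempty
`I ⊆ {1,…,n}`, all weights `1` (so `m = 2^n − 1`): with
`X = Σ_{∅≠I} (−1) Π_{i∈I} ε_i` we have `E(X²) = m`, and for `n ≥ 3`,
`E(X⁴) > (E(X²))³ / 8³`. -/
theorem stmt_14 (n : ℕ)
    (X : (Fin n → Bool) → ℝ)
    (hX : ∀ σ, X σ = ∑ I ∈ univ.filter (fun I : Finset (Fin n) => I.Nonempty),
                       -(∏ i ∈ I, (if σ i then (1 : ℝ) else -1))) :
    (∑ σ : Fin n → Bool, X σ ^ 2) / (2 ^ n : ℝ) = (2 ^ n - 1 : ℝ) ∧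
    (3 ≤ n →
      ((∑ σ : Fin n → Bool, X σ ^ 2) / (2 ^ n : ℝ)) ^ 3 / 8 ^ 3 <
        (∑ σ : Fin n → Bool, X σ ^ 4) / (2 ^ n : ℝ)) := by
  set σ₀ : Fin n → Bool := fun _ => true with hσ₀
  -- value of X
  have hval : ∀ σ, X σ = if σ = σ₀ then 1 - 2 ^ n else 1 := by
    intro σ
    rw [hX]
    have htot : ∑ I : Finset (Fin n), ∏ i ∈ I, (if σ i then (1 : ℝ) else -1)
        = ∏ i : Fin n, ((if σ i then (1 : ℝ) else -1) + 1) := by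
      rw [Finset.prod_add]
      rw [Finset.powerset_univ]
      apply Finset.sum_congr rfl
      intro t _
      simp
    have hfilter : (univ.filter (fun I : Finset (Fin n) => I.Nonempty))
        = univ.erase (∅ : Finset (Fin n)) := by
      ext I
      simp [Finset.nonempty_iff_ne_empty]
    rw [hfilter, Finset.sum_neg_distrib]
    rw [Finset.sum_erase_eq_sub (Finset.mem_univ _)]
    rw [htot]
    have hprod : (∏ i : Fin n, ((if σ i then (1 : ℝ) else -1) + 1))
        = if σ = σ₀ then (2 : ℝ) ^ n else 0 := by
      by_cases h : σ = σ₀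
      · subst h
        simp [hσ₀]
        norm_num
      · rw [if_neg h]
        have : ∃ i, σ i = false := by
          by_contra hc
          push_neg at hc
          apply h
          funext i
          simpa using hc i
        obtain ⟨i, hi⟩ := this
        apply Finset.prod_eq_zero (Finset.mem_univ i)
        simp [hi]
    rw [hprod]
    by_cases h : σ = σ₀ <;> simp [h]
  -- closed form of the power sums
  have hsum : ∀ k : ℕ, (∑ σ : Fin n → Bool, X σ ^ k)
      = (2 : ℝ) ^ n + ((1 - 2 ^ n) ^ k - 1) := by
    intro k
    have h1 : ∀ σ : Fin n → Bool,
        X σ ^ k = 1 + (if σ = σ₀ then ((1 : ℝ) - 2 ^ n) ^ k - 1 else 0) := by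
      intro σ
      rw [hval σ]
      by_cases h : σ = σ₀ <;> simp [h]
    rw [Finset.sum_congr rfl (fun σ _ => h1 σ), Finset.sum_add_distrib,
      Finset.sum_const, Finset.sum_ite_eq' _ σ₀, if_pos (Finset.mem_univ _)]
    simp [Finset.card_univ]
  have h2 := hsum 2
  have h4 := hsum 4
  have hpos : (0 : ℝ) < 2 ^ n := by positivity
  constructor
  · rw [h2]
    field_simp
    ring
  · intro hn
    have h8 : (8 : ℝ) ≤ 2 ^ n := by
      calc (8 : ℝ) = 2 ^ 3 := by norm_num
      _ ≤ 2 ^ n := by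
        apply pow_le_pow_right₀ (by norm_num) hn
    have heq2 : (∑ σ : Fin n → Bool, X σ ^ 2) / (2 ^ n : ℝ) = (2 ^ n - 1 : ℝ) := by
      rw [h2]; field_simp; ring
    rw [heq2, h4, div_lt_div_iff₀ (by norm_num) hpos]
    set t : ℝ := 2 ^ n with ht
    have h1 : (0:ℝ) ≤ (t - 1) ^ 3 := pow_nonneg (by linarith) 3
    have h2' : t ≤ 2 * (t - 1) := by linarith
    nlinarith [mul_le_mul_of_nonneg_left h2' h1,
      pow_nonneg (show (0:ℝ) ≤ t - 1 by linarith) 4,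
      pow_le_pow_left₀ (show (0:ℝ) ≤ 7 by norm_num) (show (7:ℝ) ≤ t - 1 by linarith) 4]
end

section
/- Let Y and Z be two clauses, each with exactly r distinct variables, that have a conflict (there is a literal p ∈ Y with −p ∈ Z). Under a uniform random ±1-assignment, with X_Y, X_Z defined as X_C(x) = 2^{−r} if x satisfies C and 2^{−r} − 1 otherwise, we have E(X_Y X_Z) = −4^{−r}. -/
open Finset

/-- A clause is satisfied by an assignment `x` if some literal agrees with `x`. -/
def ClauseSat {n : ℕ} (x : Fin n → Bool) (Z : Finset (Fin n × Bool)) : Prop :=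
  ∃ l ∈ Z, x l.1 = l.2

open Classical in
lemma falsify_count {n : ℕ} (C : Finset (Fin n × Bool))
    (hinj : Set.InjOn Prod.fst (C : Set (Fin n × Bool))) :
    (Finset.univ.filter fun x : Fin n → Bool => ¬ ClauseSat x C).card
      = 2 ^ (n - C.card) := by
  classical
  set S : Finset (Fin n) := C.image Prod.fst with hS
  have hScard : S.card = C.card := Finset.card_image_of_injOn hinj
  -- the forced values
  set g : Fin n → Bool := fun i =>
    if h : ∃ b, (i, b) ∈ C then !(h.choose) else false with hg
  have hgval : ∀ l ∈ C, g l.1 = !l.2 := by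
    intro l hl
    have h : ∃ b, (l.1, b) ∈ C := ⟨l.2, hl⟩
    have hch : (l.1, h.choose) ∈ C := h.choose_spec
    have : (l.1, h.choose) = l := hinj hch hl rfl
    have hb : h.choose = l.2 := by
      have := congrArg Prod.snd this; simpa using this
    rw [show g l.1 = !h.choose from dif_pos h, hb]
  have hiff : ∀ x : Fin n → Bool,
      (¬ ClauseSat x C) ↔ ∀ i ∈ S, x i = g i := by
    intro x
    constructor
    · intro hns i hi
      obtain ⟨l, hl, hfst⟩ := Finset.mem_image.mp hi
      have hne : x l.1 ≠ l.2 := fun h => hns ⟨l, hl, h⟩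
      have : x l.1 = !l.2 := by
        cases hb : l.2 <;> cases hx : x l.1 <;> simp_all
      rw [← hfst, this, hgval l hl]
    · rintro hall ⟨l, hl, hxl⟩
      have hi : l.1 ∈ S := Finset.mem_image.mpr ⟨l, hl, rfl⟩
      have := hall l.1 hi
      rw [hgval l hl] at this
      rw [this] at hxl
      simp at hxl
  have : (Finset.univ.filter fun x : Fin n → Bool => ¬ ClauseSat x C)
      = (Finset.univ.filter fun x : Fin n → Bool => ∀ i ∈ S, x i = g i) := by
    apply Finset.filter_congr; intro x _; simpa using hiff x
  rw [this]
  -- count functions agreeing with g on S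
  have hcard : (Finset.univ.filter fun x : Fin n → Bool => ∀ i ∈ S, x i = g i).card
      = Fintype.card {x : Fin n → Bool // ∀ i ∈ S, x i = g i} := by
    rw [Fintype.card_subtype]
  rw [hcard]
  have e : {x : Fin n → Bool // ∀ i ∈ S, x i = g i} ≃ ({i : Fin n // i ∉ S} → Bool) :=
    { toFun := fun x i => x.1 i.1
      invFun := fun y => ⟨fun i => if h : i ∈ S then g i else y ⟨i, h⟩,
        fun i hi => dif_pos hi⟩
      left_inv := by
        rintro ⟨x, hx⟩
        ext i
        by_cases h : i ∈ S
        · simp [dif_pos h, hx i h]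
        · simp [dif_neg h]
      right_inv := by
        intro y
        ext ⟨i, hi⟩
        simp [dif_neg hi] }
  rw [Fintype.card_congr e, Fintype.card_fun, Fintype.card_bool,
    Fintype.card_subtype_compl, Fintype.card_fin, Fintype.card_coe, hScard]

/- If clauses `Y` and `Z`, each with exactly `r` distinct variables, have a
conflict (some literal `p ∈ Y` with `−p ∈ Z`), then
`E(X_Y · X_Z) = −4^{−r}` under a uniform random assignment. -/
open Classical in
theorem stmt_17 (n r : ℕ) (Y Z : Finset (Fin n × Bool))
    (hYcard : Y.card = r) (hYvars : (Y.image Prod.fst).card = r)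
    (hZcard : Z.card = r) (hZvars : (Z.image Prod.fst).card = r)
    (hconf : ∃ p ∈ Y, (p.1, !p.2) ∈ Z)
    (XY XZ : (Fin n → Bool) → ℝ)
    (hXY : ∀ x, XY x = if ClauseSat x Y then ((2 : ℝ) ^ r)⁻¹ else ((2 : ℝ) ^ r)⁻¹ - 1)
    (hXZ : ∀ x, XZ x = if ClauseSat x Z then ((2 : ℝ) ^ r)⁻¹ else ((2 : ℝ) ^ r)⁻¹ - 1) :
    (∑ x : Fin n → Bool, XY x * XZ x) / (2 ^ n : ℝ) = -((4 : ℝ) ^ r)⁻¹ := by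
  classical
  obtain ⟨p, hpY, hpZ⟩ := hconf
  set a : ℝ := ((2 : ℝ) ^ r)⁻¹ with ha
  -- disjointness: a falsifier of Y satisfies Z
  have hdisj : ∀ x : Fin n → Bool, ¬ ClauseSat x Y → ClauseSat x Z := by
    intro x hns
    have hne : x p.1 ≠ p.2 := fun h => hns ⟨p, hpY, h⟩
    have hx : x p.1 = !p.2 := by
      cases hb : p.2 <;> cases hxx : x p.1 <;> simp_all
    exact ⟨(p.1, !p.2), hpZ, hx⟩
  have hYinj : Set.InjOn Prod.fst (Y : Set (Fin n × Bool)) := by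
    rw [← Finset.card_image_iff]; rw [hYvars, hYcard]
  have hZinj : Set.InjOn Prod.fst (Z : Set (Fin n × Bool)) := by
    rw [← Finset.card_image_iff]; rw [hZvars, hZcard]
  have hrn : r ≤ n := by
    calc r = (Y.image Prod.fst).card := hYvars.symm
    _ ≤ Fintype.card (Fin n) := Finset.card_le_univ _
    _ = n := Fintype.card_fin n
  -- pointwise rewrite
  have hpt : ∀ x : Fin n → Bool, XY x * XZ x =
      a ^ 2 - a * ((if ClauseSat x Y then (0:ℝ) else 1)
        + (if ClauseSat x Z then (0:ℝ) else 1)) := by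
    intro x
    rw [hXY, hXZ]
    by_cases hy : ClauseSat x Y <;> by_cases hz : ClauseSat x Z
    · simp only [if_pos hy, if_pos hz]; ring
    · simp only [if_pos hy, if_neg hz]; ring
    · simp only [if_neg hy, if_pos hz]; ring
    · exact absurd (hdisj x hy) hz
  have hsumY : (∑ x : Fin n → Bool, (if ClauseSat x Y then (0:ℝ) else 1))
      = 2 ^ (n - r) := by
    have h1 : (∑ x : Fin n → Bool, (if ClauseSat x Y then (0:ℝ) else 1))
        = ∑ x : Fin n → Bool, (if ¬ ClauseSat x Y then (1:ℝ) else 0) := by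
      refine Finset.sum_congr rfl fun x _ => ?_
      by_cases h : ClauseSat x Y <;> simp [h]
    have := falsify_count Y hYinj
    rw [hYcard] at this
    rw [h1, Finset.sum_boole, this]
    push_cast; ring
  have hsumZ : (∑ x : Fin n → Bool, (if ClauseSat x Z then (0:ℝ) else 1))
      = 2 ^ (n - r) := by
    have h1 : (∑ x : Fin n → Bool, (if ClauseSat x Z then (0:ℝ) else 1))
        = ∑ x : Fin n → Bool, (if ¬ ClauseSat x Z then (1:ℝ) else 0) := by
      refine Finset.sum_congr rfl fun x _ => ?_
      by_cases h : ClauseSat x Z <;> simp [h]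
    have := falsify_count Z hZinj
    rw [hZcard] at this
    rw [h1, Finset.sum_boole, this]
    push_cast; ring
  have hsum : (∑ x : Fin n → Bool, XY x * XZ x)
      = (2:ℝ) ^ n * a ^ 2 - a * ((2:ℝ) ^ (n - r) + (2:ℝ) ^ (n - r)) := by
    calc (∑ x : Fin n → Bool, XY x * XZ x)
        = ∑ x : Fin n → Bool, (a ^ 2 - a * ((if ClauseSat x Y then (0:ℝ) else 1)
            + (if ClauseSat x Z then (0:ℝ) else 1))) := by
          exact Finset.sum_congr rfl fun x _ => hpt x
      _ = (2:ℝ) ^ n * a ^ 2 - a * ((2:ℝ) ^ (n - r) + (2:ℝ) ^ (n - r)) := by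
          rw [Finset.sum_sub_distrib, Finset.sum_const, ← Finset.mul_sum,
            Finset.sum_add_distrib, hsumY, hsumZ]
          simp [Fintype.card_fun]
  have h2 : ((2:ℝ) ^ (n - r)) * 2 ^ r = 2 ^ n := by
    rw [← pow_add, Nat.sub_add_cancel hrn]
  have h4 : ((4:ℝ) ^ r) = (2 ^ r) * (2 ^ r) := by
    rw [← mul_pow]; norm_num
  have h2r : ((2:ℝ) ^ r) ≠ 0 := by positivity
  have h2n : ((2:ℝ) ^ n) ≠ 0 := by positivity
  have h3 : (2:ℝ) ^ (n - r) = 2 ^ n / 2 ^ r := by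
    field_simp [← h2]
    exact h2
  rw [hsum, h3, ha, h4]
  field_simp
  ring
end

section
/- Let Y and Z be distinct clauses, each with exactly r distinct variables, that overlap in exactly t common literals (1 ≤ t < r) and share no other variables and have no conflict. Under a uniform random ±1-assignment, with X_C(x) = 2^{−r} if x satisfies C and 2^{−r} − 1 otherwise, we have E(X_Y X_Z) = 2^{t−2r}(1 − 2^{−t}), which is at least 4^{−r}. -/
open Finset

open Classical

lemma count_fixed (n : ℕ) (S : Finset (Fin n)) (g : Fin n → Bool) :
    (Finset.univ.filter (fun x : Fin n → Bool => ∀ i ∈ S, x i = g i)).card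
      = 2 ^ (n - S.card) := by
  have e : {x : Fin n → Bool // ∀ i ∈ S, x i = g i} ≃ ({i : Fin n // i ∉ S} → Bool) :=
    { toFun := fun x i => x.1 i.1
      invFun := fun y => ⟨fun i => if h : i ∈ S then g i else y ⟨i, h⟩, by
        intro i hi; simp [hi]⟩
      left_inv := by
        rintro ⟨x, hx⟩
        ext i
        by_cases h : i ∈ S <;> simp [h, hx i]
      right_inv := by
        intro y; ext i; simp [i.2] }
  have h1 : (Finset.univ.filter (fun x : Fin n → Bool => ∀ i ∈ S, x i = g i)).card
      = Fintype.card {x : Fin n → Bool // ∀ i ∈ S, x i = g i} := by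
    rw [Fintype.card_subtype]
  rw [h1, Fintype.card_congr e, Fintype.card_fun, Fintype.card_bool,
    Fintype.card_subtype_compl, Fintype.card_coe, Fintype.card_fin]

lemma clause_count {n : ℕ} (W : Finset (Fin n × Bool))
    (hinj : Set.InjOn Prod.fst (W : Set (Fin n × Bool))) :
    (Finset.univ.filter (fun x : Fin n → Bool => ∀ l ∈ W, x l.1 = !l.2)).card
      = 2 ^ (n - (W.image Prod.fst).card) := by
  set g : Fin n → Bool := fun v =>
    if h : ∃ b, (v, b) ∈ W then !(Classical.choose h) else true with hg
  have hgval : ∀ v b, (v, b) ∈ W → g v = !b := by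
    intro v b hvb
    have hex : ∃ b, (v, b) ∈ W := ⟨b, hvb⟩
    have hc := Classical.choose_spec hex
    have : Classical.choose hex = b := by
      have := hinj hc hvb rfl
      exact congrArg Prod.snd this
    simp only [hg]
    rw [dif_pos hex, this]
  have hfilter : ∀ x : Fin n → Bool,
      (∀ l ∈ W, x l.1 = !l.2) ↔ (∀ i ∈ W.image Prod.fst, x i = g i) := by
    intro x
    constructor
    · intro h i hi
      obtain ⟨⟨v, b⟩, hvb, rfl⟩ := Finset.mem_image.mp hi
      rw [h _ hvb, hgval _ _ hvb]
    · intro h l hl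
      have hi : l.1 ∈ W.image Prod.fst := Finset.mem_image.mpr ⟨l, hl, rfl⟩
      rw [h _ hi, hgval l.1 l.2 hl]
  have : (Finset.univ.filter (fun x : Fin n → Bool => ∀ l ∈ W, x l.1 = !l.2))
      = (Finset.univ.filter (fun x : Fin n → Bool => ∀ i ∈ W.image Prod.fst, x i = g i)) := by
    ext x
    simp only [Finset.mem_filter, Finset.mem_univ, true_and]
    exact hfilter x
  rw [this, count_fixed]

open Classical in
theorem stmt_18 (n r t : ℕ) (Y Z : Finset (Fin n × Bool))
    (hYZ : Y ≠ Z)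
    (hYcard : Y.card = r) (hYvars : (Y.image Prod.fst).card = r)
    (hZcard : Z.card = r) (hZvars : (Z.image Prod.fst).card = r)
    (ht1 : 1 ≤ t) (htr : t < r)
    (hlit : (Y ∩ Z).card = t)
    (hvar : ((Y.image Prod.fst) ∩ (Z.image Prod.fst)).card = t)
    (hnoconf : ∀ p ∈ Y, (p.1, !p.2) ∉ Z)
    (XY XZ : (Fin n → Bool) → ℝ)
    (hXY : ∀ x, XY x = if ClauseSat x Y then ((2 : ℝ) ^ r)⁻¹ else ((2 : ℝ) ^ r)⁻¹ - 1)
    (hXZ : ∀ x, XZ x = if ClauseSat x Z then ((2 : ℝ) ^ r)⁻¹ else ((2 : ℝ) ^ r)⁻¹ - 1) :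
    (∑ x : Fin n → Bool, XY x * XZ x) / (2 ^ n : ℝ)
        = (2 : ℝ) ^ ((t : ℤ) - 2 * r) * (1 - ((2 : ℝ) ^ t)⁻¹) ∧
    ((4 : ℝ) ^ r)⁻¹ ≤ (2 : ℝ) ^ ((t : ℤ) - 2 * r) * (1 - ((2 : ℝ) ^ t)⁻¹) := by
  -- injectivity of Prod.fst on Y, Z, Y ∪ Z
  have hinjY : Set.InjOn Prod.fst (Y : Set (Fin n × Bool)) :=
    Finset.card_image_iff.mp (by rw [hYvars, hYcard])
  have hinjZ : Set.InjOn Prod.fst (Z : Set (Fin n × Bool)) :=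
    Finset.card_image_iff.mp (by rw [hZvars, hZcard])
  have hinjU : Set.InjOn Prod.fst ((Y ∪ Z : Finset (Fin n × Bool)) : Set (Fin n × Bool)) := by
    intro p hp q hq heq
    simp only [Finset.coe_union, Set.mem_union, Finset.mem_coe] at hp hq
    have cross : ∀ p q : Fin n × Bool, p ∈ Y → q ∈ Z → p.1 = q.1 → p = q := by
      intro p q hp hq heq
      by_cases hb : p.2 = q.2
      · exact Prod.ext heq hb
      · exfalso
        have : q = (p.1, !p.2) := by
          have : q.2 = !p.2 := by
            cases hp2 : p.2 <;> cases hq2 : q.2 <;> simp_all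
          exact Prod.ext heq.symm this
        exact hnoconf p hp (this ▸ hq)
    rcases hp with hp | hp <;> rcases hq with hq | hq
    · exact hinjY hp hq heq
    · exact cross p q hp hq heq
    · exact (cross q p hq hp heq.symm).symm
    · exact hinjZ hp hq heq
  -- cardinalities
  have hUvars : ((Y ∪ Z).image Prod.fst).card = 2 * r - t := by
    rw [Finset.image_union]
    have h := Finset.card_union_add_card_inter (Y.image Prod.fst) (Z.image Prod.fst)
    rw [hYvars, hZvars, hvar] at h
    omega
  have hrn : r ≤ n := by
    have := Finset.card_le_univ (Y.image Prod.fst)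
    simpa [hYvars, Fintype.card_fin] using this
  have hkn : 2 * r - t ≤ n := by
    have := Finset.card_le_univ ((Y ∪ Z).image Prod.fst)
    simpa [hUvars, Fintype.card_fin] using this
  -- counting
  have hnsat : ∀ (W : Finset (Fin n × Bool)) (x : Fin n → Bool),
      (¬ ClauseSat x W) ↔ ∀ l ∈ W, x l.1 = !l.2 := by
    intro W x
    unfold ClauseSat
    push_neg
    constructor
    · intro h l hl
      have := h l hl
      cases hx : x l.1 <;> cases hl2 : l.2 <;> simp_all
    · intro h l hl
      rw [h l hl]
      cases l.2 <;> simp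
  have hcountY : ((Finset.univ.filter (fun x : Fin n → Bool => ¬ ClauseSat x Y)).card : ℝ)
      = 2 ^ (n - r) := by
    have : (Finset.univ.filter (fun x : Fin n → Bool => ¬ ClauseSat x Y))
        = (Finset.univ.filter (fun x : Fin n → Bool => ∀ l ∈ Y, x l.1 = !l.2)) := by
      ext x; simp [hnsat Y x]
    rw [this, clause_count Y hinjY, hYvars]
    push_cast
    ring
  have hcountZ : ((Finset.univ.filter (fun x : Fin n → Bool => ¬ ClauseSat x Z)).card : ℝ)
      = 2 ^ (n - r) := by
    have : (Finset.univ.filter (fun x : Fin n → Bool => ¬ ClauseSat x Z))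
        = (Finset.univ.filter (fun x : Fin n → Bool => ∀ l ∈ Z, x l.1 = !l.2)) := by
      ext x; simp [hnsat Z x]
    rw [this, clause_count Z hinjZ, hZvars]
    push_cast
    ring
  have hcountYZ : ((Finset.univ.filter
        (fun x : Fin n → Bool => ¬ ClauseSat x Y ∧ ¬ ClauseSat x Z)).card : ℝ)
      = 2 ^ (n - (2 * r - t)) := by
    have : (Finset.univ.filter (fun x : Fin n → Bool => ¬ ClauseSat x Y ∧ ¬ ClauseSat x Z))
        = (Finset.univ.filter (fun x : Fin n → Bool => ∀ l ∈ Y ∪ Z, x l.1 = !l.2)) := by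
      ext x
      simp only [Finset.mem_filter, Finset.mem_univ, true_and, hnsat Y x, hnsat Z x,
        Finset.mem_union]
      constructor
      · rintro ⟨h1, h2⟩ l hl
        rcases hl with hl | hl
        · exact h1 l hl
        · exact h2 l hl
      · intro h
        exact ⟨fun l hl => h l (Or.inl hl), fun l hl => h l (Or.inr hl)⟩
    rw [this, clause_count (Y ∪ Z) hinjU, hUvars]
    push_cast
    ring
  -- the sum
  set a : ℝ := ((2 : ℝ) ^ r)⁻¹ with ha
  have key : ∀ x : Fin n → Bool, XY x * XZ x
      = a ^ 2 - a * (if ¬ ClauseSat x Y then (1:ℝ) else 0)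
        - a * (if ¬ ClauseSat x Z then (1:ℝ) else 0)
        + (if ¬ ClauseSat x Y ∧ ¬ ClauseSat x Z then (1:ℝ) else 0) := by
    intro x
    rw [hXY, hXZ]
    by_cases h1 : ClauseSat x Y <;> by_cases h2 : ClauseSat x Z <;>
      simp [h1, h2] <;> ring
  have hsum : (∑ x : Fin n → Bool, XY x * XZ x)
      = (2 ^ n : ℝ) * a ^ 2 - a * 2 ^ (n - r) - a * 2 ^ (n - r) + 2 ^ (n - (2 * r - t)) := by
    simp only [key]
    rw [Finset.sum_add_distrib, Finset.sum_sub_distrib, Finset.sum_sub_distrib,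
      ← Finset.mul_sum, ← Finset.mul_sum, Finset.sum_boole, Finset.sum_boole,
      Finset.sum_boole, Finset.sum_const, hcountY, hcountZ, hcountYZ]
    rw [Finset.card_univ]
    simp [Fintype.card_fun]
  -- real-power identities
  have h2ne : (2 : ℝ) ≠ 0 := by norm_num
  have e1 : ((2:ℝ)) ^ (n - r) = 2 ^ n / 2 ^ r := pow_sub₀ 2 h2ne hrn
  have e2 : ((2:ℝ)) ^ (n - (2 * r - t)) = 2 ^ n / 2 ^ (2 * r - t) :=
    pow_sub₀ 2 h2ne hkn
  have e3 : ((2:ℝ)) ^ (2 * r - t) = 2 ^ (2 * r) / 2 ^ t :=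
    pow_sub₀ 2 h2ne (by omega)
  have e4 : ((2:ℝ)) ^ ((t : ℤ) - 2 * r) = 2 ^ t / 2 ^ (2 * r) := by
    rw [zpow_sub₀ h2ne]
    norm_cast
  have main : (∑ x : Fin n → Bool, XY x * XZ x) / (2 ^ n : ℝ)
      = (2 : ℝ) ^ ((t : ℤ) - 2 * r) * (1 - ((2 : ℝ) ^ t)⁻¹) := by
    rw [hsum, e1, e2, e3, e4, ha]
    have hn0 : (2:ℝ) ^ n ≠ 0 := pow_ne_zero _ h2ne
    have hr0 : (2:ℝ) ^ r ≠ 0 := pow_ne_zero _ h2ne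
    have ht0 : (2:ℝ) ^ t ≠ 0 := pow_ne_zero _ h2ne
    have h2r : (2:ℝ) ^ (2 * r) = 2 ^ r * 2 ^ r := by
      rw [two_mul, pow_add]
    field_simp
    rw [h2r]
    ring
  refine ⟨main, ?_⟩
  rw [e4]
  have h4 : ((4:ℝ)) ^ r = 2 ^ (2 * r) := by
    rw [pow_mul]; norm_num
  have ht2 : (2:ℝ) ≤ 2 ^ t := by
    calc (2:ℝ) = 2 ^ 1 := (pow_one 2).symm
    _ ≤ 2 ^ t := pow_le_pow_right₀ (by norm_num) ht1
  have ht0 : (0:ℝ) < 2 ^ t := by positivity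
  have h2r0 : (0:ℝ) < 2 ^ (2 * r) := by positivity
  rw [h4]
  have : (2:ℝ) ^ t / 2 ^ (2 * r) * (1 - ((2:ℝ) ^ t)⁻¹) = (2 ^ t - 1) / 2 ^ (2 * r) := by
    field_simp
  rw [this, inv_eq_one_div]
  gcongr
  linarith
end
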